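/- Let K be a field, n, t ≥ 1, and A ∈ K^{nt×nt}. The following four statements are equivalent: (i) A = F_P for some P ∈ K^{nt×t}; (ii) R(A, E_0) = I_{nt}; (iii) R(A, G) = G(A) for all m ≥ 1 and all G ∈ K^{nt×m}; (iv) the identity [B, AB, …, A^{n-1} B] G = [G, AG, …, A^{n-1} G] B holds for all blockwise commuting B, G ∈ K^{nt×t}. -/

import Mathlib

open Matrix

/-- The second block companion matrix `F_P` associated with the stacked blocks
`P = [P_0; …; P_{n-1}] ∈ K^{nt×t}`: the `(i,j)` block (of size `t×t`) is `I_t` if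
`i = j+1`, `P_i` if `j = n-1`, and `0` otherwise. -/
def bcompanion {K : Type*} [Field K] {n t : ℕ}
    (P : Matrix (Fin (n + 1) × Fin t) (Fin t) K) :
    Matrix (Fin (n + 1) × Fin t) (Fin (n + 1) × Fin t) K :=
  Matrix.of fun r s =>
    if s.1 = Fin.last n then P r s.2
    else if (r.1 : ℕ) = (s.1 : ℕ) + 1 ∧ r.2 = s.2 then 1 else 0

/-- The `n`-step reachability matrix `R(A, G) = [G, AG, …, A^{n-1} G] ∈ K^{nt×nm}`. -/
def bkrylov {K : Type*} [Field K] {n t m : ℕ}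
    (A : Matrix (Fin (n + 1) × Fin t) (Fin (n + 1) × Fin t) K)
    (G : Matrix (Fin (n + 1) × Fin t) (Fin m) K) :
    Matrix (Fin (n + 1) × Fin t) (Fin (n + 1) × Fin m) K :=
  Matrix.of fun r s => (A ^ (s.1 : ℕ) * G) r s.2

/-- `E_i = e_i ⊗ I_t ∈ K^{nt×t}`. -/
def Eblk {K : Type*} [Field K] {n t : ℕ} (i : Fin (n + 1)) :
    Matrix (Fin (n + 1) × Fin t) (Fin t) K :=
  Matrix.of fun r c => if r.1 = i ∧ r.2 = c then 1 else 0

/-- `I_n ⊗ G_i ∈ K^{nt×nm}`, where `G_i` is the `i`-th block of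
`G = [G_0; …; G_{n-1}] ∈ K^{nt×m}`. -/
def blockDiag {K : Type*} [Field K] {n t m : ℕ}
    (G : Matrix (Fin (n + 1) × Fin t) (Fin m) K) (i : Fin (n + 1)) :
    Matrix (Fin (n + 1) × Fin t) (Fin (n + 1) × Fin m) K :=
  Matrix.of fun r s => if r.1 = s.1 then G (i, r.2) s.2 else 0

/-- The operator substitution `G(A) = Σ_{i=0}^{n-1} A^i (I_n ⊗ G_i) ∈ K^{nt×nm}`. -/
def bpolyEval {K : Type*} [Field K] {n t m : ℕ}
    (G : Matrix (Fin (n + 1) × Fin t) (Fin m) K)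
    (A : Matrix (Fin (n + 1) × Fin t) (Fin (n + 1) × Fin t) K) :
    Matrix (Fin (n + 1) × Fin t) (Fin (n + 1) × Fin m) K :=
  ∑ i : Fin (n + 1), A ^ (i : ℕ) * blockDiag G i

/-- The `i`-th block `B_i ∈ K^{t×t}` of a stacked matrix `B = [B_0; …; B_{n-1}]`. -/
def blk {K : Type*} [Field K] {n t : ℕ} (B : Matrix (Fin (n + 1) × Fin t) (Fin t) K)
    (i : Fin (n + 1)) : Matrix (Fin t) (Fin t) K :=
  Matrix.of fun a b => B (i, a) b

/-- `B` and `G` are blockwise commuting: `B_i G_j = G_j B_i` for all `i, j`. -/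
def BlockwiseComm {K : Type*} [Field K] {n t : ℕ}
    (B G : Matrix (Fin (n + 1) × Fin t) (Fin t) K) : Prop :=
  ∀ i j : Fin (n + 1), blk B i * blk G j = blk G j * blk B i
namespace BComp

variable {K : Type*} [Field K] {n t m : ℕ}

/-- The `i`-th row block of a stacked matrix. -/
def blkm (G : Matrix (Fin (n + 1) × Fin t) (Fin m) K) (i : Fin (n + 1)) :
    Matrix (Fin t) (Fin m) K := Matrix.of fun a c => G (i, a) c

/-- The `s`-th column block. -/
def cblk {α : Type*} (M : Matrix α (Fin (n + 1) × Fin m) K) (s : Fin (n + 1)) :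
    Matrix α (Fin m) K := Matrix.of fun r c => M r (s, c)

set_option linter.unusedSectionVars false in
lemma cblk_ext {α : Type*} {M N : Matrix α (Fin (n + 1) × Fin m) K}
    (h : ∀ s, cblk M s = cblk N s) : M = N := by
  ext r ⟨s, c⟩
  exact congrFun (congrFun (h s) r) c

lemma cblk_mul {α β : Type*} [Fintype β] (X : Matrix α β K)
    (Y : Matrix β (Fin (n + 1) × Fin m) K) (s : Fin (n + 1)) :
    cblk (X * Y) s = X * cblk Y s := rfl

lemma cblk_sum {α ι : Type*} (f : ι → Matrix α (Fin (n + 1) × Fin m) K)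
    (S : Finset ι) (s : Fin (n + 1)) :
    cblk (∑ i ∈ S, f i) s = ∑ i ∈ S, cblk (f i) s := by
  ext r c; simp [cblk, Matrix.sum_apply]

lemma cblk_bkrylov (A : Matrix (Fin (n + 1) × Fin t) (Fin (n + 1) × Fin t) K)
    (G : Matrix (Fin (n + 1) × Fin t) (Fin m) K) (s : Fin (n + 1)) :
    cblk (bkrylov A G) s = A ^ (s : ℕ) * G := rfl

lemma cblk_one (s : Fin (n + 1)) :
    cblk (1 : Matrix (Fin (n + 1) × Fin t) (Fin (n + 1) × Fin t) K) s = Eblk s := by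
  ext r c; simp [cblk, Eblk, one_apply, Prod.ext_iff]

lemma cblk_blockDiag (G : Matrix (Fin (n + 1) × Fin t) (Fin m) K) (i s : Fin (n + 1)) :
    cblk (blockDiag G i) s = Eblk (K := K) (t := t) s * blkm G i := by
  ext ⟨j, a⟩ c
  simp [cblk, _root_.blockDiag, Eblk, blkm, mul_apply, Fintype.sum_prod_type, ite_and]

lemma mul_eblk {α : Type*} (M : Matrix α (Fin (n + 1) × Fin t) K) (j : Fin (n + 1)) :
    M * Eblk (K := K) (t := t) j = cblk M j := by
  ext r c
  simp [cblk, Eblk, mul_apply, Fintype.sum_prod_type, ite_and, mul_ite]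

lemma eblk_sum (G : Matrix (Fin (n + 1) × Fin t) (Fin m) K) :
    G = ∑ i : Fin (n + 1), Eblk (K := K) (t := t) i * blkm G i := by
  ext ⟨j, a⟩ c
  simp [Matrix.sum_apply, Eblk, blkm, mul_apply, ite_and]

lemma mul_decomp {α : Type*} (M : Matrix α (Fin (n + 1) × Fin t) K)
    (G : Matrix (Fin (n + 1) × Fin t) (Fin m) K) :
    M * G = ∑ i : Fin (n + 1), cblk M i * blkm G i := by
  conv_lhs => rw [eblk_sum G]
  rw [Matrix.mul_sum]
  refine Finset.sum_congr rfl fun i _ => ?_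
  rw [← Matrix.mul_assoc, mul_eblk]

lemma blkm_eblk (i j : Fin (n + 1)) :
    blkm (Eblk j : Matrix (Fin (n + 1) × Fin t) (Fin t) K) i
      = if i = j then 1 else 0 := by
  ext a b
  by_cases h : i = j <;> simp [blkm, Eblk, one_apply, h]


lemma blk_eblk (i j : Fin (n + 1)) :
    blk (Eblk j : Matrix (Fin (n + 1) × Fin t) (Fin t) K) i
      = if i = j then 1 else 0 := blkm_eblk i j

lemma mul_ite_one {α : Type*} [Fintype α] [DecidableEq α]
    (X : Matrix α (Fin t) K) (c : Prop) [Decidable c] :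
    X * (if c then (1 : Matrix (Fin t) (Fin t) K) else 0)
      = if c then X else 0 := by
  split <;> simp

lemma bcomp_mul_eblk (P : Matrix (Fin (n + 1) × Fin t) (Fin t) K)
    (j : Fin (n + 1)) (hj : (j : ℕ) < n) :
    bcompanion P * Eblk (K := K) (t := t) j = Eblk (K := K) (t := t) ⟨(j : ℕ) + 1, by omega⟩ := by
  rw [mul_eblk]
  have hjl : j ≠ Fin.last n := by
    refine fun h => absurd (congrArg Fin.val h) ?_
    simp [Fin.last]; omega
  ext ⟨i, a⟩ c
  simp [cblk, bcompanion, Eblk, hjl, Fin.ext_iff, hj.ne]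

lemma pow_eblk0 (P : Matrix (Fin (n + 1) × Fin t) (Fin t) K)
    (k : ℕ) (hk : k ≤ n) :
    bcompanion P ^ k * Eblk (K := K) (n := n) (t := t) 0 = Eblk (K := K) (t := t) ⟨k, by omega⟩ := by
  induction k with
  | zero =>
    rw [pow_zero, Matrix.one_mul]
    congr 1
  | succ k ih =>
    rw [pow_succ', Matrix.mul_assoc, ih (by omega),
      bcomp_mul_eblk P ⟨k, by omega⟩ (by simpa using (by omega : k < n))]

end BComp

open BComp

/-- Theorem 5: for `A ∈ K^{nt×nt}` the following are equivalent:
(i) `A = F_P` for some `P ∈ K^{nt×t}`; (ii) `R(A, E_0) = I_{nt}`;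
(iii) `R(A, G) = G(A)` for all `G ∈ K^{nt×m}` (`m ≥ 1`);
(iv) `[B, AB, …, A^{n-1}B] G = [G, AG, …, A^{n-1}G] B` for all blockwise
commuting `B, G ∈ K^{nt×t}`. -/
theorem bcompanion_tfae {K : Type*} [Field K] {n t : ℕ} (ht : 0 < t)
    (A : Matrix (Fin (n + 1) × Fin t) (Fin (n + 1) × Fin t) K) :
    [(∃ P : Matrix (Fin (n + 1) × Fin t) (Fin t) K, A = bcompanion P),
     (bkrylov A (Eblk (0 : Fin (n + 1))) = 1),
     (∀ m : ℕ, 0 < m → ∀ G : Matrix (Fin (n + 1) × Fin t) (Fin m) K,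
        bkrylov A G = bpolyEval G A),
     (∀ B G : Matrix (Fin (n + 1) × Fin t) (Fin t) K, BlockwiseComm B G →
        bkrylov A B * G = bkrylov A G * B)].TFAE := by
  tfae_have 1 → 2 := by
    rintro ⟨P, rfl⟩
    apply cblk_ext
    intro s
    rw [cblk_bkrylov, cblk_one]
    exact pow_eblk0 P (s : ℕ) (by omega)
  tfae_have 2 → 3 := by
    intro h2 m hm G
    have hpow : ∀ s : Fin (n + 1), A ^ (s : ℕ) * Eblk (K := K) (n := n) (t := t) 0 = Eblk (K := K) (t := t) s := fun s => by
      rw [← cblk_bkrylov, h2, cblk_one]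
    have hswap : ∀ s i : Fin (n + 1),
        A ^ (s : ℕ) * Eblk (K := K) (t := t) i = A ^ (i : ℕ) * Eblk (K := K) (t := t) s := by
      intro s i
      rw [← hpow i, ← hpow s, ← Matrix.mul_assoc, ← Matrix.mul_assoc,
        ← pow_add, ← pow_add]
      congr 2
      omega
    apply cblk_ext
    intro s
    rw [cblk_bkrylov]
    show A ^ (s : ℕ) * G = cblk (∑ i : Fin (n + 1), A ^ (i : ℕ) * blockDiag G i) s
    rw [cblk_sum]
    calc A ^ (s : ℕ) * G
        = ∑ i : Fin (n + 1), A ^ (s : ℕ) * (Eblk (K := K) (t := t) i * blkm G i) := by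
          rw [← Matrix.mul_sum, ← eblk_sum]
      _ = ∑ i : Fin (n + 1), A ^ (i : ℕ) * (Eblk (K := K) (t := t) s * blkm G i) := by
          refine Finset.sum_congr rfl fun i _ => ?_
          rw [← Matrix.mul_assoc, ← Matrix.mul_assoc, hswap]
      _ = ∑ i : Fin (n + 1), cblk (A ^ (i : ℕ) * blockDiag G i) s := by
          refine Finset.sum_congr rfl fun i _ => ?_
          rw [cblk_mul, cblk_blockDiag]
  tfae_have 3 → 4 := by
    intro h3 B G hBG
    have key : ∀ i, blockDiag B i * G = G * blk B i := by
      intro i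
      rw [mul_decomp (blockDiag B i) G]
      conv_rhs => rw [eblk_sum G, Matrix.sum_mul]
      refine Finset.sum_congr rfl fun j _ => ?_
      rw [cblk_blockDiag, Matrix.mul_assoc, Matrix.mul_assoc]
      congr 1
      exact hBG i j
    rw [h3 t ht B]
    show (∑ i : Fin (n + 1), A ^ (i : ℕ) * blockDiag B i) * G = _
    rw [Matrix.sum_mul]
    calc ∑ i : Fin (n + 1), A ^ (i : ℕ) * blockDiag B i * G
        = ∑ i : Fin (n + 1), A ^ (i : ℕ) * G * blk B i := by
          refine Finset.sum_congr rfl fun i _ => ?_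
          rw [Matrix.mul_assoc, key i, ← Matrix.mul_assoc]
      _ = bkrylov A G * B := by
          rw [mul_decomp (bkrylov A G) B]
          refine Finset.sum_congr rfl fun i _ => ?_
          rw [cblk_bkrylov]
          rfl
  tfae_have 4 → 2 := by
    intro h4
    apply cblk_ext
    intro j
    rw [cblk_bkrylov, cblk_one]
    have hcomm : BlockwiseComm (Eblk 0)
        (Eblk j : Matrix (Fin (n + 1) × Fin t) (Fin t) K) := by
      intro i j'
      rw [blk_eblk, blk_eblk]
      split_ifs <;> simp
    have h := h4 (Eblk 0) (Eblk j) hcomm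
    rw [mul_decomp (bkrylov A (Eblk 0)) (Eblk j),
        mul_decomp (bkrylov A (Eblk j)) (Eblk 0)] at h
    simp only [cblk_bkrylov, blkm_eblk, mul_ite_one,
      Finset.sum_ite_eq', Finset.mem_univ, if_true] at h
    simpa using h
  tfae_have 2 → 1 := by
    intro h2
    have hpow : ∀ s : Fin (n + 1), A ^ (s : ℕ) * Eblk (K := K) (n := n) (t := t) 0 = Eblk (K := K) (t := t) s := fun s => by
      rw [← cblk_bkrylov, h2, cblk_one]
    refine ⟨cblk A (Fin.last n), cblk_ext fun j => ?_⟩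
    rcases eq_or_ne j (Fin.last n) with rfl | hj
    · ext r c
      simp [cblk, bcompanion]
    · have hjn : (j : ℕ) < n := by
        have h1 := j.isLt
        have h2 : (j : ℕ) ≠ n := fun h => hj (Fin.ext (by simp [Fin.last, h]))
        omega
      have h1 : cblk A j = A ^ ((j : ℕ) + 1) * Eblk (K := K) (n := n) (t := t) 0 := by
        rw [← mul_eblk, ← hpow j, ← Matrix.mul_assoc, ← pow_succ']
      have h2' : A ^ ((j : ℕ) + 1) * Eblk (K := K) (n := n) (t := t) 0 = Eblk (K := K) (t := t) ⟨(j : ℕ) + 1, by omega⟩ :=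
        hpow ⟨(j : ℕ) + 1, by omega⟩
      rw [h1, h2']
      ext ⟨i, a⟩ c
      simp [cblk, bcompanion, Eblk, hj, Fin.ext_iff, hjn.ne]
  tfae_finish
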